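/- For coprime integers α, β with β odd and α > β ≥ 1, there exists a continued fraction expansion α/β = [a₁, a₂, …, a_m] with m odd and a₂, a₄, … all even. -/

import Mathlib

/-- Evaluation of the continued fraction `[a₁,…,a_m] = a₁ − 1/(a₂ − 1/(⋯ − 1/a_m))`.
(Note `1/0 = 0` in `ℚ`, so `cfVal [a] = a`.) -/
def cfVal : List ℤ → ℚ
  | [] => 0
  | a :: l => (a : ℚ) - 1 / cfVal l

lemma cfVal_cons (a : ℤ) (l : List ℤ) : cfVal (a :: l) = (a : ℚ) - 1 / cfVal l := rfl

lemma key : ∀ n : ℕ, ∀ α β : ℤ, β.natAbs ≤ n → 1 ≤ β → Odd β → IsCoprime α β →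
    ∃ L : List ℤ, Odd L.length ∧
      (∀ (i : ℕ) (h : i < L.length), i % 2 = 1 → Even (L.get ⟨i, h⟩)) ∧
      cfVal L = (α : ℚ) / β := by
  intro n
  induction n with
  | zero => intro α β hn hβ _ _; exfalso; omega
  | succ n ih =>
    intro α β hn hβ hodd hcop
    by_cases hβ1 : β = 1
    · refine ⟨[α], by simp, ?_, ?_⟩
      · intro i h hi; simp at h; omega
      · simp [cfVal, hβ1]
    have hβ2 : 2 ≤ β := by omega
    set r := (-α) % β with hr_def
    have hr0 : 0 ≤ r := Int.emod_nonneg _ (by omega)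
    have hrβ : r < β := Int.emod_lt_of_pos _ (by omega)
    have hdvd : β ∣ α + r := by
      have h := Int.emod_def (-α) β
      exact ⟨-((-α) / β), by linarith⟩
    have hrne : r ≠ 0 := by
      intro h0
      have hβα : β ∣ α := by
        have := hdvd; rw [h0, add_zero] at this; exact this
      have hg := Int.isCoprime_iff_gcd_eq_one.mp hcop
      have h1 : β.natAbs ∣ Int.gcd α β :=
        Nat.dvd_gcd (Int.natAbs_dvd_natAbs.mpr hβα) dvd_rfl
      rw [hg] at h1
      have := Nat.eq_one_of_dvd_one h1
      omega
    have hr1 : 1 ≤ r := by omega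
    set a₁ := (α + r) / β with ha₁_def
    have ha₁ : a₁ * β = α + r := Int.ediv_mul_cancel hdvd
    set q := (β + r) / (2 * r) with hq_def
    set t := (β + r) % (2 * r) with ht_def
    have ht : 2 * r * q + t = β + r := by
      rw [hq_def, ht_def]; linarith [Int.mul_ediv_add_emod (β + r) (2 * r)]
    have ht0 : 0 ≤ t := Int.emod_nonneg _ (by omega)
    have htlt : t < 2 * r := Int.emod_lt_of_pos _ (by omega)
    set s := 2 * q * r - β with hs_def
    have hs_eq : s = r - t := by linear_combination hs_def + ht
    have hslt : -r < s ∧ s ≤ r := by omega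
    obtain ⟨k, hk⟩ := hodd
    have hsodd : Odd s := ⟨q * r - k - 1, by linear_combination hs_def - hk⟩
    have hsne : s ≠ 0 := by rcases hsodd with ⟨m, hm⟩; omega
    obtain ⟨u, v, huv⟩ := hcop
    have hcr : IsCoprime r β := ⟨-u, u * a₁ + v, by linear_combination huv + u * ha₁⟩
    obtain ⟨u', v', huv'⟩ := hcr
    have hcs : IsCoprime (if 0 < s then r else -r) (if 0 < s then s else -s) := by
      have h1 : IsCoprime r s := ⟨u' + 2 * q * v', -v', by linear_combination huv' - v' * hs_def⟩
      split_ifs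
      · exact h1
      · exact h1.neg_left.neg_right
    set α₂ := if 0 < s then r else -r with hα₂
    set β₂ := if 0 < s then s else -s with hβ₂
    have hβ₂1 : 1 ≤ β₂ := by rw [hβ₂]; split_ifs <;> omega
    have hβ₂odd : Odd β₂ := by
      rw [hβ₂]; split_ifs
      · exact hsodd
      · exact hsodd.neg
    have hβ₂n : β₂.natAbs ≤ n := by rw [hβ₂]; split_ifs <;> omega
    obtain ⟨L', hlen, hidx, hval⟩ := ih α₂ β₂ hβ₂n hβ₂1 hβ₂odd hcs
    have hval' : cfVal L' = (r : ℚ) / s := by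
      rw [hval, hα₂, hβ₂]
      split_ifs
      · rfl
      · push_cast; rw [neg_div_neg_eq]
    have hrQ : (r : ℚ) ≠ 0 := by exact_mod_cast hrne
    have hsQ : (s : ℚ) ≠ 0 := by exact_mod_cast hsne
    have hβQ : (β : ℚ) ≠ 0 := by
      have : β ≠ 0 := by omega
      exact_mod_cast this
    have hmid : cfVal (2 * q :: L') = (β : ℚ) / r := by
      rw [cfVal_cons, hval', one_div_div]
      have hβrs : (β : ℚ) = 2 * q * r - s := by
        have : (s : ℚ) = 2 * q * r - β := by exact_mod_cast hs_def
        linarith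
      rw [hβrs]; field_simp; push_cast; ring
    refine ⟨a₁ :: 2 * q :: L', ?_, ?_, ?_⟩
    · simpa [Nat.odd_add_one, Nat.even_add_one, parity_simps] using hlen
    · intro i h hi
      match i with
      | 0 => simp at hi
      | 1 => exact ⟨q, two_mul q⟩
      | (i + 2) =>
        exact hidx i (by simpa using h) (by omega)
    · rw [cfVal_cons, hmid, one_div_div]
      have hαr : (α : ℚ) = a₁ * β - r := by
        have : (a₁ : ℚ) * β = α + r := by exact_mod_cast ha₁
        linarith
      rw [hαr]; field_simp; try ring

theorem stmt_7 (α β : ℤ) (hβ : 1 ≤ β) (hαβ : β < α) (hodd : Odd β)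
    (hcop : IsCoprime α β) :
    ∃ L : List ℤ, Odd L.length ∧
      (∀ (i : ℕ) (h : i < L.length), i % 2 = 1 → Even (L.get ⟨i, h⟩)) ∧
      cfVal L = (α : ℚ) / β := by
  exact key β.natAbs α β le_rfl hβ hodd hcop
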